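/- Let H be a finite group, k ≥ 1, G = Hᵏ, and p a prime. Let T₁ = (a₁,b₁,c₁) and T₂ = (a₂,b₂,c₂) be triples of elements of G. If S_p(d₁) ∩ S_p(d₂) = ∅ for every d₁ ∈ {a₁,b₁,c₁} and every d₂ ∈ {a₂,b₂,c₂}, then there is no element g ∈ G of order p lying in both Σ(T₁) and Σ(T₂). -/

import Mathlib

open scoped MatrixGroups

/-- `Σ(T)`: the union of all conjugates of the cyclic subgroups generated by the
three entries of the triple `T = (a, b, c)`. -/
def SigmaSet {G : Type*} [Group G] (T : G × G × G) : Set G :=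
  {x | ∃ g : G, g * x * g⁻¹ ∈
    (Subgroup.zpowers T.1 : Set G) ∪ (Subgroup.zpowers T.2.1 : Set G) ∪
      (Subgroup.zpowers T.2.2 : Set G)}

/-- `T = (a,b,c)` is a generating triple: `a*b*c = 1` and `{a,b,c}` generates. -/
def IsGenTriple {G : Type*} [Group G] (T : G × G × G) : Prop :=
  T.1 * T.2.1 * T.2.2 = 1 ∧ Subgroup.closure {T.1, T.2.1, T.2.2} = ⊤

/-- `T` is hyperbolic: the reciprocals of the orders of its entries sum to less than 1. -/
def IsHyperbolic {G : Type*} [Group G] (T : G × G × G) : Prop :=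
  (orderOf T.1 : ℚ)⁻¹ + (orderOf T.2.1 : ℚ)⁻¹ + (orderOf T.2.2 : ℚ)⁻¹ < 1

/-- An unmixed Beauville structure on `G`: a pair of hyperbolic generating triples
`T₁, T₂` with `Σ(T₁) ∩ Σ(T₂) = {1}`. -/
def HasBeauvilleStructure (G : Type*) [Group G] : Prop :=
  ∃ T₁ T₂ : G × G × G, IsGenTriple T₁ ∧ IsHyperbolic T₁ ∧ IsGenTriple T₂ ∧ IsHyperbolic T₂ ∧
    SigmaSet T₁ ∩ SigmaSet T₂ = {1}

/-- `φ₂(H)`: the number of ordered generating pairs of `H`. -/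
noncomputable def phi2 (H : Type*) [Group H] : ℕ :=
  Nat.card {p : H × H // Subgroup.closure {p.1, p.2} = ⊤}

/-- Two triples are equivalent if some automorphism carries one to the other entrywise. -/
def TripleEquiv {H : Type*} [Group H] (T T' : H × H × H) : Prop :=
  ∃ α : MulAut H, α T.1 = T'.1 ∧ α T.2.1 = T'.2.1 ∧ α T.2.2 = T'.2.2

/-- The `p`-summit of `d ∈ Hᵏ`: the set of indices at which the `p`-adic valuation of the
order of the coordinate attains its maximum over all coordinates. -/
def pSummit {H : Type*} [Group H] {k : ℕ} (p : ℕ) (d : Fin k → H) : Set (Fin k) :=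
  {j | ∀ j', (orderOf (d j')).factorization p ≤ (orderOf (d j)).factorization p}

/-- An element `h` of `H` is `p`-full if the highest power of `p` dividing the exponent of
`H` divides the order of `h`. -/
def PFull (H : Type*) [Group H] (p : ℕ) (h : H) : Prop :=
  p ^ (Monoid.exponent H).factorization p ∣ orderOf h

open scoped Classical in
/-- `ν_p(T)`: the number of `p`-full entries of the triple `T`. -/
noncomputable def nuP {H : Type*} [Group H] (p : ℕ) (T : H × H × H) : ℕ :=
  (if PFull H p T.1 then 1 else 0) + (if PFull H p T.2.1 then 1 else 0) +
    (if PFull H p T.2.2 then 1 else 0)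

/-- Two triples are `p`-distinguishing if `ν_p(T₁) ≠ ν_p(T₂)`. -/
def PDistinguishing {H : Type*} [Group H] (p : ℕ) (T₁ T₂ : H × H × H) : Prop :=
  nuP p T₁ ≠ nuP p T₂

/-- Two triples are strongly `p`-distinguishing if they are `p`-distinguishing and whenever
`ν_p(T_i) = 0` then either `p²` does not divide the exponent of `H` or `p` divides none of
the orders of the entries of `T_i`. -/
def StronglyPDistinguishing {H : Type*} [Group H] (p : ℕ) (T₁ T₂ : H × H × H) : Prop :=
  PDistinguishing p T₁ T₂ ∧
    ∀ T ∈ ({T₁, T₂} : Set (H × H × H)), nuP p T = 0 →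
      ¬ (p ^ 2 ∣ Monoid.exponent H) ∨
        (¬ p ∣ orderOf T.1 ∧ ¬ p ∣ orderOf T.2.1 ∧ ¬ p ∣ orderOf T.2.2)

/-- The cyclic shift of a triple: `(x, y, z) ↦ (y, z, x)`. -/
def cycShift {H : Type*} (T : H × H × H) : H × H × H := (T.2.1, T.2.2, T.1)

private lemma order_conj_eq {G : Type*} [Group G] (u g : G) :
    orderOf (u * g * u⁻¹) = orderOf g := by
  have h : SemiconjBy u g (u * g * u⁻¹) := by
    unfold SemiconjBy; group
  exact (h.orderOf_eq u).symm

private lemma summit_eq_aux {H : Type*} [Group H] [Finite H] {k : ℕ} {p : ℕ} (hp : p.Prime)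
    {g d : Fin k → H} (hg : orderOf g = p)
    (u : Fin k → H) (hmem : u * g * u⁻¹ ∈ Subgroup.zpowers d) :
    pSummit p d = {j | orderOf (g j) = p} := by
  obtain ⟨n, hn⟩ := mem_powers_iff_mem_zpowers.2 hmem
  have hdich : ∀ j, orderOf (g j) = p ∨ orderOf (g j) = 1 := by
    intro j
    have hdvd : orderOf (g j) ∣ p := by
      have := orderOf_map_dvd (Pi.evalMonoidHom (fun _ : Fin k => H) j) g
      rwa [hg] at this
    rcases (Nat.dvd_prime hp).1 hdvd with h | h
    · exact Or.inr h
    · exact Or.inl h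
  have hne : n ≠ 0 := by
    intro h
    subst h
    have : orderOf (u * g * u⁻¹) = 1 := by
      rw [← hn]; simp
    rw [order_conj_eq, hg] at this
    exact hp.one_lt.ne' this
  have hordpos : ∀ j, orderOf (d j) ≠ 0 := fun j => (orderOf_pos (d j)).ne'
  set e := n.factorization p with he
  have key : ∀ j, (orderOf (g j)).factorization p
      = (orderOf (d j)).factorization p - min ((orderOf (d j)).factorization p) e := by
    intro j
    have h1 : (d j) ^ n = u j * g j * (u j)⁻¹ := by
      have := congrFun hn j
      simpa using this
    have h2 : orderOf ((d j) ^ n) = orderOf (g j) := by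
      rw [h1, order_conj_eq]
    rw [← h2, orderOf_pow, Nat.factorization_div (Nat.gcd_dvd_left _ _),
      Nat.factorization_gcd (hordpos j) hne]
    simp [Finsupp.inf_apply, he]
  have hA : ∀ j, orderOf (g j) = p → (orderOf (d j)).factorization p = e + 1 := by
    intro j hj
    have := key j
    rw [hj, hp.factorization_self] at this
    omega
  have hB : ∀ j, orderOf (g j) = 1 → (orderOf (d j)).factorization p ≤ e := by
    intro j hj
    have := key j
    rw [hj] at this
    simp only [Nat.factorization_one, Finsupp.coe_zero, Pi.zero_apply] at this
    omega
  -- some coordinate of g has order p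
  have hgne : g ≠ 1 := by
    intro h; rw [h, orderOf_one] at hg; exact hp.one_lt.ne' hg.symm
  obtain ⟨j₀, hj₀⟩ : ∃ j, g j ≠ 1 := by
    by_contra h
    push_neg at h
    exact hgne (funext h)
  have hj₀p : orderOf (g j₀) = p := by
    rcases hdich j₀ with h | h
    · exact h
    · exact absurd (orderOf_eq_one_iff.1 h) hj₀
  ext j
  simp only [pSummit, Set.mem_setOf_eq]
  constructor
  · intro hsum
    rcases hdich j with h | h
    · exact h
    · exfalso
      have h1 := hsum j₀
      have h2 := hA j₀ hj₀p
      have h3 := hB j h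
      omega
  · intro hj
    intro j'
    have h2 := hA j hj
    rcases hdich j' with h | h
    · rw [hA j' h, h2]
    · have := hB j' h; omega

/-- Lemma 4.1: if all six pairwise intersections of `p`-summits of the entries of `T₁` and
`T₂` are empty, then no element of order `p` lies in both `Σ(T₁)` and `Σ(T₂)`. -/
theorem no_common_order_p_of_disjoint_summits (H : Type*) [Group H] [Finite H]
    (k : ℕ) (hk : 1 ≤ k) (p : ℕ) (hp : p.Prime)
    (T₁ T₂ : (Fin k → H) × (Fin k → H) × (Fin k → H))
    (hdisj : ∀ d₁ ∈ ({T₁.1, T₁.2.1, T₁.2.2} : Set (Fin k → H)),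
      ∀ d₂ ∈ ({T₂.1, T₂.2.1, T₂.2.2} : Set (Fin k → H)),
        pSummit p d₁ ∩ pSummit p d₂ = ∅) :
    ¬ ∃ g : Fin k → H, orderOf g = p ∧ g ∈ SigmaSet T₁ ∧ g ∈ SigmaSet T₂ := by
  rintro ⟨g, hg, h1, h2⟩
  obtain ⟨u₁, hu₁⟩ := h1
  obtain ⟨u₂, hu₂⟩ := h2
  obtain ⟨d₁, hd₁mem, hd₁⟩ : ∃ d ∈ ({T₁.1, T₁.2.1, T₁.2.2} : Set (Fin k → H)),
      u₁ * g * u₁⁻¹ ∈ Subgroup.zpowers d := by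
    rcases hu₁ with (h | h) | h
    · exact ⟨T₁.1, by simp, h⟩
    · exact ⟨T₁.2.1, by simp, h⟩
    · exact ⟨T₁.2.2, by simp, h⟩
  obtain ⟨d₂, hd₂mem, hd₂⟩ : ∃ d ∈ ({T₂.1, T₂.2.1, T₂.2.2} : Set (Fin k → H)),
      u₂ * g * u₂⁻¹ ∈ Subgroup.zpowers d := by
    rcases hu₂ with (h | h) | h
    · exact ⟨T₂.1, by simp, h⟩
    · exact ⟨T₂.2.1, by simp, h⟩
    · exact ⟨T₂.2.2, by simp, h⟩
  have e₁ := summit_eq_aux hp hg u₁ hd₁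
  have e₂ := summit_eq_aux hp hg u₂ hd₂
  have hgne : g ≠ 1 := by
    intro h; rw [h, orderOf_one] at hg; exact hp.one_lt.ne' hg.symm
  obtain ⟨j₀, hj₀⟩ : ∃ j, g j ≠ 1 := by
    by_contra h
    push_neg at h
    exact hgne (funext h)
  have hj₀p : orderOf (g j₀) = p := by
    have hdvd : orderOf (g j₀) ∣ p := by
      have := orderOf_map_dvd (Pi.evalMonoidHom (fun _ : Fin k => H) j₀) g
      rwa [hg] at this
    rcases (Nat.dvd_prime hp).1 hdvd with h | h
    · exact absurd (orderOf_eq_one_iff.1 h) hj₀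
    · exact h
  have hmem : j₀ ∈ pSummit p d₁ ∩ pSummit p d₂ := by
    constructor
    · rw [e₁]; exact hj₀p
    · rw [e₂]; exact hj₀p
  rw [hdisj d₁ hd₁mem d₂ hd₂mem] at hmem
  exact hmem
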